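/- Let a₂, …, aₙ and c be nonnegative reals (n ≥ 3), r ≥ 1, k ≥ 1, 0 ≤ α ≤ r/2, and l = ((1+k)^(α/r) - (1/2)^(α/r))/k^(α/r). Suppose there exist nonnegative reals c₂ = c, c₃, …, cₙ with cᵢ^r ≥ aᵢ^r + c_{i+1}^r for i = 2, …, n-1 (where cₙ = aₙ), and suppose k·aᵢ^r ≤ c_{i+1}^r for i = 2, …, n-1. Then c^α ≥ (1/2)^(α/r)·(a₂^α + l·a₃^α + ⋯ + l^(n-3)·a_{n-1}^α) + l^(n-2)·aₙ^α. -/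

import Mathlib

open Real

private lemma core_ineq (t k x : ℝ) (ht0 : 0 ≤ t) (ht : t ≤ 1/2) (hk : 1 ≤ k)
    (hx : k ≤ x) :
    (1/2 : ℝ) ^ t + (((1 + k) ^ t - (1/2 : ℝ) ^ t) / k ^ t) * x ^ t ≤ (1 + x) ^ t := by
  rcases eq_or_lt_of_le ht0 with h0 | ht0'
  · simp [← h0, Real.rpow_zero]
  have hk0 : (0:ℝ) < k := lt_of_lt_of_le one_pos hk
  have hx0 : (0:ℝ) < x := lt_of_lt_of_le hk0 hx
  set g : ℝ → ℝ := fun y => ((1 + y) ^ t - (1/2 : ℝ) ^ t) * y ^ (-t) with hg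
  have hd : ∀ y : ℝ, 0 < y →
      HasDerivAt g (t * (1 + y) ^ (t - 1) * y ^ (-t)
        + ((1 + y) ^ t - (1/2 : ℝ) ^ t) * (-t * y ^ (-t - 1))) y := by
    intro y hy
    have h1 : HasDerivAt (fun z : ℝ => (1 + z) ^ t) (t * (1 + y) ^ (t - 1)) y := by
      have hb : (0:ℝ) < 1 + y := by linarith
      have := (Real.hasDerivAt_rpow_const (x := 1 + y) (p := t)
        (Or.inl (ne_of_gt hb))).comp y ((hasDerivAt_id y).const_add 1)
      simpa [Function.comp_def] using this
    have h2 : HasDerivAt (fun z : ℝ => z ^ (-t)) (-t * y ^ (-t - 1)) y := by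
      simpa using Real.hasDerivAt_rpow_const (x := y) (p := -t) (Or.inl (ne_of_gt hy))
    exact (h1.sub_const _).mul h2
  have hmono : MonotoneOn g (Set.Ici (1:ℝ)) := by
    apply monotoneOn_of_deriv_nonneg (convex_Ici 1)
    · intro y hy
      exact ((hd y (lt_of_lt_of_le one_pos hy)).continuousAt).continuousWithinAt
    · intro y hy
      rw [interior_Ici] at hy
      exact ((hd y (lt_trans one_pos hy)).differentiableAt).differentiableWithinAt
    · intro y hy
      rw [interior_Ici] at hy
      have hy0 : (0:ℝ) < y := lt_trans one_pos hy
      have hy1 : (1:ℝ) < y := hy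
      rw [(hd y hy0).deriv]
      have hb : (0:ℝ) < 1 + y := by linarith
      have e1 : y ^ (-t) = y ^ (-t - 1) * y := by
        rw [← Real.rpow_add_one (ne_of_gt hy0)]; ring_nf
      have e2 : (1 + y) ^ t = (1 + y) ^ (t - 1) * (1 + y) := by
        rw [← Real.rpow_add_one (ne_of_gt hb)]; ring_nf
      have hA : (1 + y) ^ (t - 1) ≤ (1/2 : ℝ) ^ t := by
        have s1 : (1 + y) ^ (t - 1) ≤ (2:ℝ) ^ (t - 1) :=
          Real.rpow_le_rpow_of_nonpos two_pos (by linarith) (by linarith)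
        have s2 : (2:ℝ) ^ (t - 1) ≤ (2:ℝ) ^ (-t) :=
          Real.rpow_le_rpow_of_exponent_le (by norm_num) (by linarith)
        have s3 : (1/2 : ℝ) ^ t = (2:ℝ) ^ (-t) := by
          rw [Real.rpow_neg (by norm_num), ← Real.inv_rpow (by norm_num)]
          norm_num
        rw [s3]; linarith
      have hB : (0:ℝ) ≤ y ^ (-t - 1) := Real.rpow_nonneg hy0.le _
      rw [e1, e2]
      have : t * (1 + y) ^ (t - 1) * (y ^ (-t - 1) * y)
          + ((1 + y) ^ (t - 1) * (1 + y) - (1/2 : ℝ) ^ t) * (-t * y ^ (-t - 1))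
          = t * y ^ (-t - 1) * ((1/2 : ℝ) ^ t - (1 + y) ^ (t - 1)) := by ring
      rw [this]
      have := mul_nonneg (mul_nonneg ht0'.le hB) (sub_nonneg.mpr hA)
      linarith
  have hgk : g k ≤ g x := hmono (Set.mem_Ici.mpr hk) (Set.mem_Ici.mpr (le_trans hk hx)) hx
  have hkt : (0:ℝ) < k ^ t := Real.rpow_pos_of_pos hk0 t
  have hxt : (0:ℝ) < x ^ t := Real.rpow_pos_of_pos hx0 t
  have hgkval : g k = ((1 + k) ^ t - (1/2 : ℝ) ^ t) / k ^ t := by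
    simp only [hg]
    rw [Real.rpow_neg hk0.le, div_eq_mul_inv]
    ring
  have hxinv : x ^ (-t) * x ^ t = 1 := by
    rw [Real.rpow_neg hx0.le]
    exact inv_mul_cancel₀ (ne_of_gt hxt)
  have hmul := mul_le_mul_of_nonneg_right hgk hxt.le
  rw [hgkval] at hmul
  have : ((1 + x) ^ t - (1/2 : ℝ) ^ t) * x ^ (-t) * x ^ t
      = (1 + x) ^ t - (1/2 : ℝ) ^ t := by
    rw [mul_assoc, hxinv, mul_one]
  rw [this] at hmul
  linarith

private lemma step_ineq (r α k ai ci ci1 : ℝ) (hr : 1 ≤ r) (hα0 : 0 ≤ α) (hα : α ≤ r / 2)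
    (hk : 1 ≤ k) (hai : 0 < ai) (hci : 0 ≤ ci) (hci1 : 0 ≤ ci1)
    (hnest : ci ^ r ≥ ai ^ r + ci1 ^ r) (hcond : k * ai ^ r ≤ ci1 ^ r) :
    ci ^ α ≥ (1/2 : ℝ) ^ (α / r) * ai ^ α
      + (((1 + k) ^ (α / r) - (1/2 : ℝ) ^ (α / r)) / k ^ (α / r)) * ci1 ^ α := by
  have hr0 : (0:ℝ) < r := lt_of_lt_of_le one_pos hr
  set t := α / r with htdef
  have ht0 : 0 ≤ t := div_nonneg hα0 hr0.le
  have ht : t ≤ 1/2 := by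
    rw [htdef, div_le_div_iff₀ hr0 two_pos]; linarith
  have hrt : r * t = α := by rw [htdef]; field_simp
  have har : (0:ℝ) < ai ^ r := Real.rpow_pos_of_pos hai r
  set x := ci1 ^ r / ai ^ r with hxdef
  have hx : k ≤ x := (le_div_iff₀ har).mpr hcond
  have hx0 : 0 ≤ x := le_trans (by linarith) hx
  have hxe : ai ^ r * x = ci1 ^ r := by
    rw [hxdef]; field_simp
  have key := core_ineq t k x ht0 ht hk hx
  have e1 : ci ^ α = (ci ^ r) ^ t := by rw [← Real.rpow_mul hci, hrt]
  have e2 : ci1 ^ α = (ci1 ^ r) ^ t := by rw [← Real.rpow_mul hci1, hrt]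
  have e3 : ai ^ α = (ai ^ r) ^ t := by rw [← Real.rpow_mul hai.le, hrt]
  have h4 : (ai ^ r + ci1 ^ r) ^ t ≤ (ci ^ r) ^ t :=
    Real.rpow_le_rpow (by positivity) hnest ht0
  have h5 : (ai ^ r + ci1 ^ r) ^ t = (ai ^ r) ^ t * (1 + x) ^ t := by
    rw [← Real.mul_rpow har.le (by linarith : (0:ℝ) ≤ 1 + x)]
    congr 1
    rw [mul_add, mul_one, hxe]
  have h6 : (ai ^ r) ^ t * x ^ t = (ci1 ^ r) ^ t := by
    rw [← Real.mul_rpow har.le hx0, hxe]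
  have hart : (0:ℝ) ≤ (ai ^ r) ^ t := Real.rpow_nonneg har.le t
  have hmul := mul_le_mul_of_nonneg_left key hart
  rw [e1, e2, e3]
  calc (ci ^ r) ^ t ≥ (ai ^ r + ci1 ^ r) ^ t := h4
    _ = (ai ^ r) ^ t * (1 + x) ^ t := h5
    _ ≥ (ai ^ r) ^ t * ((1/2 : ℝ) ^ t
        + (((1 + k) ^ t - (1/2 : ℝ) ^ t) / k ^ t) * x ^ t) := hmul
    _ = (1/2 : ℝ) ^ t * (ai ^ r) ^ t
        + (((1 + k) ^ t - (1/2 : ℝ) ^ t) / k ^ t) * ((ai ^ r) ^ t * x ^ t) := by ring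
    _ = (1/2 : ℝ) ^ t * (ai ^ r) ^ t
        + (((1 + k) ^ t - (1/2 : ℝ) ^ t) / k ^ t) * (ci1 ^ r) ^ t := by rw [h6]

theorem theorem3_case2 (n : ℕ) (hn : 3 ≤ n) (a c : ℕ → ℝ) (r k α : ℝ)
    (hr : 1 ≤ r) (hk : 1 ≤ k) (hα0 : 0 ≤ α) (hα : α ≤ r / 2)
    (hapos : ∀ i, 2 ≤ i → i ≤ n → 0 < a i)
    (hcpos : ∀ i, 2 ≤ i → i ≤ n → 0 ≤ c i)
    (hcn : c n = a n)
    (hnest : ∀ i, 2 ≤ i → i ≤ n - 1 → c i ^ r ≥ a i ^ r + c (i + 1) ^ r)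
    (hcond : ∀ i, 2 ≤ i → i ≤ n - 1 → k * a i ^ r ≤ c (i + 1) ^ r) :
    c 2 ^ α ≥
      (1 / 2 : ℝ) ^ (α / r) *
        (∑ i ∈ Finset.Icc 2 (n - 1),
          (((1 + k) ^ (α / r) - (1 / 2 : ℝ) ^ (α / r)) / k ^ (α / r)) ^ (i - 2) * a i ^ α) +
      (((1 + k) ^ (α / r) - (1 / 2 : ℝ) ^ (α / r)) / k ^ (α / r)) ^ (n - 2) * a n ^ α := by
  have hr0 : (0:ℝ) < r := lt_of_lt_of_le one_pos hr
  set t := α / r with htdef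
  set l := ((1 + k) ^ t - (1 / 2 : ℝ) ^ t) / k ^ t with hldef
  have ht0 : 0 ≤ t := div_nonneg hα0 hr0.le
  have hl0 : 0 ≤ l := by
    rw [hldef]
    apply div_nonneg _ (Real.rpow_nonneg (by linarith) t)
    have : (1/2 : ℝ) ^ t ≤ (1 + k) ^ t :=
      Real.rpow_le_rpow (by norm_num) (by linarith) ht0
    simpa [sub_nonneg] using this
  have hhalf : (0:ℝ) ≤ (1/2 : ℝ) ^ t := Real.rpow_nonneg (by norm_num) t
  have key : ∀ m : ℕ, ∀ j : ℕ, 2 ≤ j → j ≤ n → n - j = m →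
      c j ^ α ≥ (1/2 : ℝ) ^ t * ∑ i ∈ Finset.Icc j (n - 1), l ^ (i - j) * a i ^ α
        + l ^ (n - j) * a n ^ α := by
    intro m
    induction m with
    | zero =>
      intro j h2 hjn hm
      have hjeq : j = n := by omega
      subst hjeq
      have hempty : Finset.Icc j (j - 1) = ∅ := Finset.Icc_eq_empty (by omega)
      rw [hcn, hempty, Nat.sub_self]
      simp
    | succ m ih =>
      intro j h2 hjn hm
      have hjn1 : j ≤ n - 1 := by omega
      have hstep := step_ineq r α k (a j) (c j) (c (j + 1)) hr hα0 hα hk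
        (hapos j h2 (by omega)) (hcpos j h2 (by omega))
        (hcpos (j + 1) (by omega) (by omega)) (hnest j h2 hjn1) (hcond j h2 hjn1)
      rw [← htdef, ← hldef] at hstep
      have hih := ih (j + 1) (by omega) (by omega) (by omega)
      have hmul : l * ((1/2 : ℝ) ^ t * ∑ i ∈ Finset.Icc (j+1) (n-1), l ^ (i - (j+1)) * a i ^ α
          + l ^ (n - (j+1)) * a n ^ α) ≤ l * c (j + 1) ^ α :=
        mul_le_mul_of_nonneg_left hih hl0
      have hsplit : ∑ i ∈ Finset.Icc j (n - 1), l ^ (i - j) * a i ^ α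
          = a j ^ α + l * ∑ i ∈ Finset.Icc (j + 1) (n - 1), l ^ (i - (j + 1)) * a i ^ α := by
        have hins : Finset.Icc j (n - 1) = insert j (Finset.Icc (j + 1) (n - 1)) := by
          ext x; simp only [Finset.mem_Icc, Finset.mem_insert]; omega
        rw [hins, Finset.sum_insert (by simp only [Finset.mem_Icc]; omega),
          Nat.sub_self, pow_zero, one_mul, Finset.mul_sum]
        congr 1
        apply Finset.sum_congr rfl
        intro i hi
        simp only [Finset.mem_Icc] at hi
        rw [show i - j = (i - (j + 1)) + 1 from by omega, pow_succ', mul_assoc]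
      have hpow : l ^ (n - j) = l * l ^ (n - (j + 1)) := by
        rw [show n - j = (n - (j + 1)) + 1 from by omega, pow_succ']
      rw [hsplit, hpow]
      set S := ∑ i ∈ Finset.Icc (j + 1) (n - 1), l ^ (i - (j + 1)) * a i ^ α
      have : (1/2 : ℝ) ^ t * (a j ^ α + l * S) + l * l ^ (n - (j+1)) * a n ^ α
          = (1/2 : ℝ) ^ t * a j ^ α
            + l * ((1/2 : ℝ) ^ t * S + l ^ (n - (j+1)) * a n ^ α) := by ring
      rw [this]
      linarith
  exact key (n - 2) 2 le_rfl (by omega) rfl
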